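/- Let σ be a prefix normal word chain generator of length n and j ∈ [n−1] with σ(j) < σ(j+1). Then the permutation σ' obtained from σ by swapping the values at positions j and j+1 (i.e., σ'(j) = σ(j+1), σ'(j+1) = σ(j), σ'(k) = σ(k) otherwise) is also a prefix normal word chain generator. -/

import Mathlib

/-- A binary word (list of booleans, `true` = letter 1) is prefix normal if every
factor has at most as many 1s as the prefix of the same length. -/
def prefixNormal (w : List Bool) : Prop :=
  ∀ v : List Bool, v <:+: w → v.count true ≤ (w.take v.length).count true

/-- The word chain of a permutation σ of positions (0-indexed): `pnChain σ 0 = 1^n`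
and `pnChain σ (k+1)` flips position `σ k` of `pnChain σ k` from 1 to 0.
(`pnChain σ k` corresponds to the paper's `c_σ[k+1]`.) -/
def pnChain {n : ℕ} (σ : Equiv.Perm (Fin n)) : ℕ → List Bool
  | 0 => List.replicate n true
  | k + 1 => if h : k < n then (pnChain σ k).set (σ ⟨k, h⟩) false else pnChain σ k

/-- σ is a prefix normal word chain generator iff every word of its chain is prefix normal. -/
def isPNGen {n : ℕ} (σ : Equiv.Perm (Fin n)) : Prop :=
  ∀ k ≤ n, prefixNormal (pnChain σ k)


/-- Number of 1s in the prefix of length `m`. -/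
def fC (w : List Bool) (m : ℕ) : ℕ := (w.take m).count true

lemma fC_mono (w : List Bool) {m m' : ℕ} (h : m ≤ m') : fC w m ≤ fC w m' := by
  have : w.take m = (w.take m').take m := by rw [List.take_take, Nat.min_eq_left h]
  rw [fC, fC, this]
  exact ((w.take m').take_sublist m).count_le true

lemma fC_add (w : List Bool) (s ℓ : ℕ) :
    fC w (s + ℓ) = fC w s + ((w.drop s).take ℓ).count true := by
  rw [fC, fC, List.take_add, List.count_append]


lemma prefixNormal_iff (w : List Bool) :
    prefixNormal w ↔ ∀ s ℓ : ℕ, fC w (s + ℓ) ≤ fC w s + fC w ℓ := by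
  constructor
  · intro h s ℓ
    rw [fC_add]
    have hinf : (w.drop s).take ℓ <:+: w := by
      refine ⟨w.take s, (w.drop s).drop ℓ, ?_⟩
      rw [List.append_assoc, List.take_append_drop, List.take_append_drop]
    have hlen : ((w.drop s).take ℓ).length ≤ ℓ := by
      simp [List.length_take]
    calc fC w s + ((w.drop s).take ℓ).count true
        ≤ fC w s + fC w ((w.drop s).take ℓ).length := by
          exact Nat.add_le_add_left (h _ hinf) _
      _ ≤ fC w s + fC w ℓ := Nat.add_le_add_left (fC_mono w hlen) _
  · rintro h v ⟨t, u, rfl⟩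
    have h1 : fC (t ++ v ++ u) (t.length + v.length) = t.count true + v.count true := by
      rw [fC, List.append_assoc, List.take_append, List.take_of_length_le (by omega),
        Nat.add_sub_cancel_left, List.take_append, List.take_of_length_le (le_refl _),
        Nat.sub_self, List.take_zero, List.append_nil, List.count_append]
    have h2 : fC (t ++ v ++ u) t.length = t.count true := by
      rw [fC, List.append_assoc, List.take_append, List.take_of_length_le (le_refl _),
        Nat.sub_self, List.take_zero, List.append_nil]
    have := h t.length v.length
    rw [h1, h2] at this
    exact le_of_add_le_add_left this

lemma fC_set {w : List Bool} {p : ℕ} (hp : p < w.length) (hw : w[p] = true) (m : ℕ) :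
    fC w m = fC (w.set p false) m + (if p < m then 1 else 0) := by
  have hsplit : w = w.take p ++ true :: w.drop (p + 1) := by
    conv_lhs => rw [← List.take_append_drop p w, List.drop_eq_getElem_cons hp, hw]
  have hset : w.set p false = w.take p ++ false :: w.drop (p + 1) :=
    List.set_eq_take_cons_drop false hp
  have hlen : (w.take p).length = p := by simp [List.length_take]; omega
  rw [hset]; simp only [fC]
  conv_lhs => rw [hsplit]; simp only [fC]
  rw [List.take_append, List.take_append,
    List.count_append, List.count_append, hlen]
  by_cases hm : p < m
  · have : m - p = (m - p - 1) + 1 := by omega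
    rw [if_pos hm, this, List.take_succ_cons, List.take_succ_cons,
      List.count_cons, List.count_cons]
    simp
    try ring
  · rw [if_neg hm]
    have : m - p = 0 := by omega
    simp [this]

/-- The key combinatorial lemma: if `w` is prefix normal with 1s at positions `a < q`,
and the word obtained by zeroing both `a` and `q` is prefix normal, then so is the word
obtained by zeroing only `q`. -/
lemma pn_swap {w : List Bool} {a q : ℕ} (haq : a < q) (hq : q < w.length)
    (ha1 : w[a]'(by omega) = true) (hq1 : w[q] = true)
    (h0 : prefixNormal w) (h2 : prefixNormal ((w.set a false).set q false)) :
    prefixNormal (w.set q false) := by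
  rw [prefixNormal_iff] at h0 h2 ⊢
  intro s ℓ
  have ha' : a < (w.set q false).length := by simpa using lt_trans haq hq
  have hwa' : (w.set q false)[a]'ha' = true := by
    rw [List.getElem_set_ne (by omega)]; exact ha1
  have hcomm : (w.set q false).set a false = (w.set a false).set q false :=
    List.set_comm _ _ (by omega)
  -- relations between the counting functions
  have E0 : ∀ m, fC w m = fC (w.set q false) m + (if q < m then 1 else 0) :=
    fun m => fC_set hq hq1 m
  have E2 : ∀ m, fC (w.set q false) m
      = fC ((w.set a false).set q false) m + (if a < m then 1 else 0) := by
    intro m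
    rw [← hcomm]
    exact fC_set ha' hwa' m
  have hA := E2 (s + ℓ); have hB := E2 s; have hC := E2 ℓ
  have hD := E0 (s + ℓ); have hE := E0 s; have hF := E0 ℓ
  have S0 := h0 s ℓ
  have S2 := h2 s ℓ
  split_ifs at hA hB hC hD hE hF <;> omega

lemma pnChain_length {n : ℕ} (σ : Equiv.Perm (Fin n)) (k : ℕ) :
    (pnChain σ k).length = n := by
  induction k with
  | zero => simp [pnChain]
  | succ k ih => rw [pnChain]; split <;> simp [ih]

lemma pnChain_succ {n : ℕ} (σ : Equiv.Perm (Fin n)) (k : ℕ) (h : k < n) :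
    pnChain σ (k + 1) = (pnChain σ k).set (σ ⟨k, h⟩) false := by
  rw [pnChain, dif_pos h]

lemma pnChain_congr {n : ℕ} (σ τ : Equiv.Perm (Fin n)) (k : ℕ)
    (h : ∀ m (hm : m < n), m < k → σ ⟨m, hm⟩ = τ ⟨m, hm⟩) :
    pnChain σ k = pnChain τ k := by
  induction k with
  | zero => rfl
  | succ k ih =>
    rw [pnChain, pnChain]
    split
    · rename_i hk
      rw [ih (fun m hm hmk => h m hm (by omega)), h k hk (by omega)]
    · exact ih (fun m hm hmk => h m hm (by omega))

lemma pnChain_getElem_true {n : ℕ} (σ : Equiv.Perm (Fin n)) (k : ℕ) (hk : k ≤ n)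
    (i : Fin n) (hi : ∀ m (hm : m < k), σ ⟨m, lt_of_lt_of_le hm hk⟩ ≠ i) :
    (pnChain σ k)[(i : ℕ)]'(by rw [pnChain_length]; exact i.isLt) = true := by
  induction k with
  | zero => simp [pnChain]
  | succ k ih =>
    have hkn : k < n := by omega
    rw [List.getElem_of_eq (pnChain_succ σ k hkn)]
    rw [List.getElem_set_ne]
    · exact ih (by omega) (fun m hm => hi m (by omega))
    · intro hc
      exact hi k (by omega) (Fin.val_injective (by exact_mod_cast hc))


/-- Swapping two adjacent entries of a prefix normal generator with the smaller one first
yields again a prefix normal generator. -/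
theorem pnGen_swap_lt {n : ℕ} (σ : Equiv.Perm (Fin n)) (hσ : isPNGen σ)
    (j : ℕ) (hj : j + 1 < n)
    (hlt : σ ⟨j, by omega⟩ < σ ⟨j + 1, hj⟩) :
    isPNGen (σ * Equiv.swap ⟨j, by omega⟩ ⟨j + 1, hj⟩) := by
  set J : Fin n := ⟨j, by omega⟩ with hJ
  set J' : Fin n := ⟨j + 1, hj⟩ with hJ'
  set σ' := σ * Equiv.swap J J' with hσ'
  have happ : ∀ x : Fin n, x ≠ J → x ≠ J' → σ' x = σ x := by
    intro x h1 h2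
    simp [hσ', Equiv.Perm.mul_apply, Equiv.swap_apply_of_ne_of_ne h1 h2]
  have happJ : σ' J = σ J' := by simp [hσ', Equiv.Perm.mul_apply]
  have happJ' : σ' J' = σ J := by simp [hσ', Equiv.Perm.mul_apply]
  -- the chains agree up to index j
  have hag : ∀ k, k ≤ j → pnChain σ' k = pnChain σ k := by
    intro k hk
    apply pnChain_congr
    intro m hm hmk
    apply happ <;> (intro hc; rw [Fin.ext_iff] at hc; simp [hJ, hJ'] at hc; omega)
  -- the chains agree from index j+2 on
  have hag2 : ∀ k, j + 2 ≤ k → pnChain σ' k = pnChain σ k := by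
    have base : pnChain σ' (j + 2) = pnChain σ (j + 2) := by
      rw [pnChain_succ σ' (j+1) hj, pnChain_succ σ (j+1) hj,
        pnChain_succ σ' j (by omega), pnChain_succ σ j (by omega)]
      have e1 : (⟨j, by omega⟩ : Fin n) = J := rfl
      have e2 : (⟨j + 1, hj⟩ : Fin n) = J' := rfl
      rw [e1, e2, happJ, happJ', hag j le_rfl]
      apply List.set_comm
      have : σ J ≠ σ J' := by
        intro hc
        have := σ.injective hc
        rw [Fin.ext_iff] at this; simp [hJ, hJ'] at this
      intro hc
      exact this (Fin.val_injective hc).symm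
    intro k hk
    induction k with
    | zero => omega
    | succ k ih =>
      rcases Nat.lt_or_ge k (j + 2) with h | h
      · have : k + 1 = j + 2 := by omega
        rw [this]; exact base
      · by_cases hkn : k < n
        · rw [pnChain_succ σ' k hkn, pnChain_succ σ k hkn, ih (by omega),
            happ ⟨k, hkn⟩ (Fin.ne_of_val_ne (show k ≠ j by omega))
              (Fin.ne_of_val_ne (show k ≠ j + 1 by omega))]
        · rw [pnChain, pnChain, dif_neg hkn, dif_neg hkn, ih (by omega)]
  intro k hk
  rcases Nat.lt_or_ge k (j + 1) with h | h
  · rw [hag k (by omega)]; exact hσ k hk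
  rcases Nat.lt_or_ge (j + 1) k with h2 | h2
  · rw [hag2 k (by omega)]; exact hσ k hk
  -- the interesting case : k = j + 1
  have hkj : k = j + 1 := by omega
  subst hkj
  rw [pnChain_succ σ' j (by omega)]
  have e1 : (⟨j, by omega⟩ : Fin n) = J := rfl
  rw [e1, happJ, hag j le_rfl]
  -- now the goal is about (pnChain σ j).set (σ J') false
  have hlen : (pnChain σ j).length = n := pnChain_length σ j
  have haq : (σ J : ℕ) < (σ J' : ℕ) := hlt
  have hinj : ∀ (m : ℕ) (hm : m < j) (x : Fin n), x.1 ≥ j →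
      σ ⟨m, by omega⟩ ≠ σ x := by
    intro m hm x hx hc
    have := σ.injective hc
    rw [Fin.ext_iff] at this; simp at this; omega
  have ha1 : (pnChain σ j)[(σ J : ℕ)]'(by rw [hlen]; exact (σ J).isLt) = true :=
    pnChain_getElem_true σ j (by omega) (σ J) (fun m hm => hinj m hm J (by simp [hJ]))
  have hq1 : (pnChain σ j)[(σ J' : ℕ)]'(by rw [hlen]; exact (σ J').isLt) = true :=
    pnChain_getElem_true σ j (by omega) (σ J') (fun m hm => hinj m hm J' (by simp [hJ']))
  have h2 : prefixNormal (((pnChain σ j).set (σ J) false).set (σ J') false) := by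
    have := hσ (j + 2) (by omega)
    rw [pnChain_succ σ (j+1) hj, pnChain_succ σ j (by omega)] at this
    exact this
  exact pn_swap haq (by rw [hlen]; exact (σ J').isLt) ha1 hq1 (hσ j (by omega)) h2
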